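/- Fix k, m ∈ ℕ, c > 0, θ ∈ [0, π/2], L > 0, and an L-Lipschitz function h : ℝ → ℝ. Let w_1,…,w_m ∈ ℝ^k be nonzero vectors with ‖w_j‖₂ ≤ c for all j and ρ(w_j, w_l) ≥ θ for all j ≠ l, and let W ∈ ℝ^{k×m} be the matrix with columns w_1,…,w_m. Then for every v ∈ ℝ^k, writing h∘v ∈ ℝ^k for the coordinatewise application of h to v, one has ‖Wᵀ(h∘v)‖₂² ≤ c² ((m−1)cos θ + 1) (k h(0)² + L² ‖v‖₂² + 2 L |h(0)| √k ‖v‖₂). -/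

import Mathlib

open RealInnerProductSpace

/-- The nonobtuse angle `ρ(u,v) = arccos(|⟨u,v⟩| / (‖u‖‖v‖))` between two vectors. -/
noncomputable def rho {E : Type*} [NormedAddCommGroup E] [InnerProductSpace ℝ E]
    (u v : E) : ℝ :=
  Real.arccos (|⟪u, v⟫| / (‖u‖ * ‖v‖))

/-- Single-layer recursion step: if `w_1,…,w_m ∈ ℝ^k` are nonzero, have
norm at most `c` and pairwise nonobtuse angles at least `θ`, then for any `v ∈ ℝ^k`,
`‖Wᵀ(h∘v)‖₂² = Σ_j ⟨w_j, h∘v⟩² ≤ c²((m−1)cos θ + 1)(k h(0)² + L²‖v‖² + 2L|h(0)|√k ‖v‖)`,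
where `h∘v` is the coordinatewise application of the `L`-Lipschitz function `h`. -/
theorem stmt_10 {k m : ℕ} (c θ L : ℝ) (hc : 0 < c)
    (hθ : θ ∈ Set.Icc 0 (Real.pi / 2)) (hL : 0 < L)
    (h : ℝ → ℝ) (hLip : LipschitzWith L.toNNReal h)
    (w : Fin m → EuclideanSpace ℝ (Fin k))
    (hw0 : ∀ j, w j ≠ 0) (hwn : ∀ j, ‖w j‖ ≤ c)
    (hang : ∀ j l, j ≠ l → θ ≤ rho (w j) (w l))
    (v : EuclideanSpace ℝ (Fin k)) :
    ∑ j, ⟪w j, (WithLp.toLp 2 (fun i => h (v i)) : EuclideanSpace ℝ (Fin k))⟫ ^ 2 ≤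
      c ^ 2 * ((m - 1 : ℝ) * Real.cos θ + 1) *
        (k * h 0 ^ 2 + L ^ 2 * ‖v‖ ^ 2 + 2 * L * |h 0| * Real.sqrt k * ‖v‖) := by
  have hpi := Real.pi_pos
  have hcos0 : 0 ≤ Real.cos θ :=
    Real.cos_nonneg_of_mem_Icc ⟨by linarith [hθ.1], hθ.2⟩
  have hcos1 : Real.cos θ ≤ 1 := Real.cos_le_one θ
  set u : EuclideanSpace ℝ (Fin k) := WithLp.toLp 2 (fun i => h (v i)) with hu
  set s : Fin m → ℝ := fun j => ⟪w j, u⟫ with hs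
  set S : ℝ := ∑ j, s j ^ 2 with hS
  have hS0 : 0 ≤ S := Finset.sum_nonneg fun j _ => sq_nonneg _
  set A : ℝ := c ^ 2 * ((m - 1 : ℝ) * Real.cos θ + 1) with hA
  have hA0 : 0 ≤ A := by
    have : (0:ℝ) ≤ (m - 1 : ℝ) * Real.cos θ + 1 := by
      rcases Nat.eq_zero_or_pos m with hm | hm
      · subst hm; simp; nlinarith
      · have : (1:ℝ) ≤ (m:ℝ) := by exact_mod_cast hm
        nlinarith
    positivity
  -- Off-diagonal inner product bound
  have hoff : ∀ j l, j ≠ l → |⟪w j, w l⟫| ≤ c ^ 2 * Real.cos θ := by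
    intro j l hjl
    have hnj : 0 < ‖w j‖ := norm_pos_iff.mpr (hw0 j)
    have hnl : 0 < ‖w l‖ := norm_pos_iff.mpr (hw0 l)
    have hx1 : |⟪w j, w l⟫| / (‖w j‖ * ‖w l‖) ≤ 1 := by
      rw [div_le_one (by positivity)]
      exact abs_real_inner_le_norm _ _
    have hx0 : (0:ℝ) ≤ |⟪w j, w l⟫| / (‖w j‖ * ‖w l‖) := by positivity
    have h1 : θ ≤ Real.arccos (|⟪w j, w l⟫| / (‖w j‖ * ‖w l‖)) := hang j l hjl
    have h2 : |⟪w j, w l⟫| / (‖w j‖ * ‖w l‖) ≤ Real.cos θ := by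
      calc |⟪w j, w l⟫| / (‖w j‖ * ‖w l‖)
          = Real.cos (Real.arccos (|⟪w j, w l⟫| / (‖w j‖ * ‖w l‖))) :=
            (Real.cos_arccos (by linarith) hx1).symm
        _ ≤ Real.cos θ :=
            Real.cos_le_cos_of_nonneg_of_le_pi hθ.1 (Real.arccos_le_pi _) h1
    have h3 : |⟪w j, w l⟫| ≤ Real.cos θ * (‖w j‖ * ‖w l‖) := by
      rw [div_le_iff₀ (by positivity)] at h2
      linarith [h2]
    have h4 : ‖w j‖ * ‖w l‖ ≤ c * c :=
      mul_le_mul (hwn j) (hwn l) hnl.le hc.le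
    nlinarith
  -- Step 1 : S ≤ A * ‖u‖^2
  have step1 : S ≤ A * ‖u‖ ^ 2 := by
    set x : EuclideanSpace ℝ (Fin k) := ∑ j, s j • w j with hx
    have hxu : ⟪x, u⟫ = S := by
      rw [hx, sum_inner]
      refine Finset.sum_congr rfl fun j _ => ?_
      rw [real_inner_smul_left]; ring
    set T : ℝ := ⟪x, x⟫ with hT
    have hTval : T = ∑ j, ∑ l, s j * s l * ⟪w j, w l⟫ := by
      rw [hT, hx, sum_inner]
      refine Finset.sum_congr rfl fun j _ => ?_
      rw [inner_sum]
      refine Finset.sum_congr rfl fun l _ => ?_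
      rw [real_inner_smul_left, real_inner_smul_right]; ring
    -- Cauchy-Schwarz : S^2 ≤ T * ‖u‖^2
    have hCS : S ^ 2 ≤ T * ‖u‖ ^ 2 := by
      have h0 := real_inner_mul_inner_self_le x u
      rw [hxu] at h0
      have h1 : ⟪u, u⟫ = ‖u‖ ^ 2 := real_inner_self_eq_norm_sq u
      calc S ^ 2 = S * S := sq S
        _ ≤ ⟪x, x⟫ * ⟪u, u⟫ := h0
        _ = T * ‖u‖ ^ 2 := by rw [← hT, h1]
    -- Bound T ≤ A * S
    have hTbound : T ≤ A * S := by
      have hterm : ∀ j l : Fin m, s j * s l * ⟪w j, w l⟫ ≤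
          c ^ 2 * Real.cos θ * (|s j| * |s l|) +
          (if j = l then c ^ 2 * (1 - Real.cos θ) * s j ^ 2 else 0) := by
        intro j l
        by_cases hjl : j = l
        · subst hjl
          rw [if_pos rfl, real_inner_self_eq_norm_sq]
          have hw2 : ‖w j‖ ^ 2 ≤ c ^ 2 := by nlinarith [hwn j, norm_nonneg (w j)]
          have habs : |s j| * |s j| = s j ^ 2 := by rw [← abs_mul, ← sq, abs_sq]
          rw [habs]
          nlinarith [sq_nonneg (s j), hw2]
        · simp only [if_neg hjl, add_zero]
          calc s j * s l * ⟪w j, w l⟫ ≤ |s j * s l * ⟪w j, w l⟫| := le_abs_self _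
            _ = |s j| * |s l| * |⟪w j, w l⟫| := by rw [abs_mul, abs_mul]
            _ ≤ |s j| * |s l| * (c ^ 2 * Real.cos θ) := by
                apply mul_le_mul_of_nonneg_left (hoff j l hjl) (by positivity)
            _ = c ^ 2 * Real.cos θ * (|s j| * |s l|) := by ring
      have h5 : T ≤ ∑ j, ∑ l, (c ^ 2 * Real.cos θ * (|s j| * |s l|) +
          (if j = l then c ^ 2 * (1 - Real.cos θ) * s j ^ 2 else 0)) := by
        rw [hTval]
        exact Finset.sum_le_sum fun j _ => Finset.sum_le_sum fun l _ => hterm j l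
      have h6 : ∑ j, ∑ l, (c ^ 2 * Real.cos θ * (|s j| * |s l|) +
          (if j = l then c ^ 2 * (1 - Real.cos θ) * s j ^ 2 else 0)) =
          c ^ 2 * Real.cos θ * (∑ j, |s j|) ^ 2 + c ^ 2 * (1 - Real.cos θ) * S := by
        simp_rw [Finset.sum_add_distrib]
        congr 1
        · have e : (∑ j, |s j|) ^ 2 = ∑ j, ∑ l, |s j| * |s l| := by
            rw [pow_two, Finset.sum_mul_sum]
          rw [e, Finset.mul_sum]
          exact Finset.sum_congr rfl fun j _ => by rw [Finset.mul_sum]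
        · rw [hS, Finset.mul_sum]
          refine Finset.sum_congr rfl fun j _ => ?_
          simp
      have h7 : (∑ j, |s j|) ^ 2 ≤ (m : ℝ) * S := by
        have := sq_sum_le_card_mul_sum_sq (s := Finset.univ)
          (f := fun j => |s j|)
        simp only [Finset.card_univ, Fintype.card_fin, sq_abs] at this
        exact_mod_cast this
      calc T ≤ c ^ 2 * Real.cos θ * (∑ j, |s j|) ^ 2 + c ^ 2 * (1 - Real.cos θ) * S :=
            le_of_le_of_eq h5 h6
        _ ≤ c ^ 2 * Real.cos θ * ((m : ℝ) * S) + c ^ 2 * (1 - Real.cos θ) * S := by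
            gcongr
        _ = A * S := by rw [hA]; ring
    -- Combine
    rcases eq_or_lt_of_le hS0 with hSz | hSpos
    · rw [← hSz]
      positivity
    · have : S * S ≤ (A * ‖u‖ ^ 2) * S := by
        calc S * S = S ^ 2 := (sq S).symm
          _ ≤ T * ‖u‖ ^ 2 := hCS
          _ ≤ (A * S) * ‖u‖ ^ 2 := by
              apply mul_le_mul_of_nonneg_right hTbound (sq_nonneg _)
          _ = (A * ‖u‖ ^ 2) * S := by ring
      exact le_of_mul_le_mul_right this hSpos
  -- Step 2 : ‖u‖^2 ≤ k h0² + L²‖v‖² + 2L|h0|√k‖v‖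
  have hLcoe : (L.toNNReal : ℝ) = L := Real.coe_toNNReal L hL.le
  have hpt : ∀ i, |h (v i)| ≤ |h 0| + L * |v i| := by
    intro i
    have := hLip.dist_le_mul (v i) 0
    rw [Real.dist_eq, Real.dist_eq, sub_zero, hLcoe] at this
    calc |h (v i)| = |h 0 + (h (v i) - h 0)| := by ring_nf
      _ ≤ |h 0| + |h (v i) - h 0| := abs_add_le _ _
      _ ≤ |h 0| + L * |v i| := by linarith
  have hnu : ‖u‖ ^ 2 = ∑ i, h (v i) ^ 2 := by
    rw [hu, EuclideanSpace.norm_eq, Real.sq_sqrt (by positivity)]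
    exact Finset.sum_congr rfl fun i _ => by rw [Real.norm_eq_abs, sq_abs]
  have hnv : ‖v‖ ^ 2 = ∑ i, (v i) ^ 2 := by
    rw [EuclideanSpace.norm_eq, Real.sq_sqrt (by positivity)]
    exact Finset.sum_congr rfl fun i _ => by rw [Real.norm_eq_abs, sq_abs]
  have habsv : ∑ i, |v i| ≤ Real.sqrt k * ‖v‖ := by
    have h7 : (∑ i, |v i|) ^ 2 ≤ (k : ℝ) * ‖v‖ ^ 2 := by
      have := sq_sum_le_card_mul_sum_sq (s := Finset.univ)
        (f := fun i : Fin k => |v i|)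
      simp only [Finset.card_univ, Fintype.card_fin, sq_abs] at this
      rw [hnv]
      exact_mod_cast this
    have h8 : (0:ℝ) ≤ ∑ i, |v i| := Finset.sum_nonneg fun i _ => abs_nonneg _
    calc ∑ i, |v i| = Real.sqrt ((∑ i, |v i|) ^ 2) := (Real.sqrt_sq h8).symm
      _ ≤ Real.sqrt ((k : ℝ) * ‖v‖ ^ 2) := Real.sqrt_le_sqrt h7
      _ = Real.sqrt k * ‖v‖ := by
          rw [Real.sqrt_mul (Nat.cast_nonneg k), Real.sqrt_sq (norm_nonneg v)]
  have step2 : ‖u‖ ^ 2 ≤ (k : ℝ) * h 0 ^ 2 + L ^ 2 * ‖v‖ ^ 2 +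
      2 * L * |h 0| * Real.sqrt k * ‖v‖ := by
    have hterm : ∀ i, h (v i) ^ 2 ≤ h 0 ^ 2 + L ^ 2 * (v i) ^ 2 + 2 * L * |h 0| * |v i| := by
      intro i
      have h1 := hpt i
      have h3 : |h (v i)| ^ 2 ≤ (|h 0| + L * |v i|) ^ 2 :=
        pow_le_pow_left₀ (abs_nonneg _) h1 2
      calc h (v i) ^ 2 = |h (v i)| ^ 2 := (sq_abs _).symm
        _ ≤ (|h 0| + L * |v i|) ^ 2 := h3
        _ = h 0 ^ 2 + L ^ 2 * (v i) ^ 2 + 2 * L * |h 0| * |v i| := by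
            rw [add_sq, sq_abs, mul_pow, sq_abs]; ring
    calc ‖u‖ ^ 2 = ∑ i, h (v i) ^ 2 := hnu
      _ ≤ ∑ i, (h 0 ^ 2 + L ^ 2 * (v i) ^ 2 + 2 * L * |h 0| * |v i|) :=
          Finset.sum_le_sum fun i _ => hterm i
      _ = (k : ℝ) * h 0 ^ 2 + L ^ 2 * (∑ i, (v i) ^ 2) +
          2 * L * |h 0| * (∑ i, |v i|) := by
          rw [Finset.sum_add_distrib, Finset.sum_add_distrib, ← Finset.mul_sum,
            ← Finset.mul_sum, Finset.sum_const, Finset.card_univ, Fintype.card_fin,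
            nsmul_eq_mul]
      _ ≤ (k : ℝ) * h 0 ^ 2 + L ^ 2 * ‖v‖ ^ 2 + 2 * L * |h 0| * Real.sqrt k * ‖v‖ := by
          rw [hnv]
          have : 2 * L * |h 0| * (∑ i, |v i|) ≤ 2 * L * |h 0| * (Real.sqrt k * ‖v‖) :=
            mul_le_mul_of_nonneg_left habsv (by positivity)
          linarith
  calc S ≤ A * ‖u‖ ^ 2 := step1
    _ ≤ A * ((k : ℝ) * h 0 ^ 2 + L ^ 2 * ‖v‖ ^ 2 + 2 * L * |h 0| * Real.sqrt k * ‖v‖) :=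
        mul_le_mul_of_nonneg_left step2 hA0
    _ = _ := rfl
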